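/- Let j : ℝᴺ → [0,∞] be measurable, even, with 0 < ∫ min{1,|z|²} j(z) dz < ∞. Suppose δ > 0 is such that j_δ := j·1_{ℝᴺ∖B_δ} belongs to L¹(ℝᴺ) and is not a.e. zero, and set w_δ := j_δ / ‖j_δ‖_{L¹}. Then for every u ∈ 𝒟ʲ(ℝᴺ), ‖u − w_δ * u‖_{L²(ℝᴺ)} ≤ (2/‖j_δ‖_{L¹(ℝᴺ)})^{1/2} ‖u‖, where ‖u‖² = ℰ_j(u,u) + ‖u‖²_{L²}. -/

import Mathlib

open MeasureTheory ENNReal Filter Topology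

noncomputable section

/-- N-dimensional Euclidean space. -/
abbrev Euc (N : ℕ) := EuclideanSpace ℝ (Fin N)

/-- The nonlocal quadratic form ℰ_j(u,u) = (1/2)∬ (u(x)-u(y))² j(x-y) dx dy. -/
def Ej {N : ℕ} (j : Euc N → ℝ≥0∞) (u : Euc N → ℝ) : ℝ≥0∞ :=
  (1/2 : ℝ≥0∞) * ∫⁻ p : Euc N × Euc N,
    ENNReal.ofReal ((u p.1 - u p.2)^2) * j (p.1 - p.2) ∂(volume.prod volume)

/-- The squared L² norm of u. -/
def l2sq {N : ℕ} (u : Euc N → ℝ) : ℝ≥0∞ := ∫⁻ x, ENNReal.ofReal ((u x)^2)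

/-- The squared norm of 𝒟ʲ(ℝᴺ): ‖u‖² = ℰ_j(u,u) + ‖u‖²_{L²}. -/
def DnormSq {N : ℕ} (j : Euc N → ℝ≥0∞) (u : Euc N → ℝ) : ℝ≥0∞ := Ej j u + l2sq u

/-- Membership in 𝒟ʲ(ℝᴺ) = {u ∈ L² : ℰ_j(u,u) < ∞}. -/
def MemDj {N : ℕ} (j : Euc N → ℝ≥0∞) (u : Euc N → ℝ) : Prop :=
  MemLp u 2 (volume : Measure (Euc N)) ∧ Ej j u < ⊤

/-- Condition (A1): 0 < ∫ min{1,|z|²} j(z) dz < ∞ (evenness stated separately). -/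
def CondA1 {N : ℕ} (j : Euc N → ℝ≥0∞) : Prop :=
  0 < ∫⁻ z, ENNReal.ofReal (min 1 (‖z‖^2)) * j z ∧
    (∫⁻ z, ENNReal.ofReal (min 1 (‖z‖^2)) * j z) < ⊤

/-- The kernel j cut off outside the ball of radius δ. -/
def jdelta {N : ℕ} (j : Euc N → ℝ≥0∞) (δ : ℝ) : Euc N → ℝ≥0∞ :=
  fun z => if ‖z‖ < δ then 0 else j z

/-- The normalized weight w_δ = j_δ / ‖j_δ‖_{L¹}. -/
def wdelta {N : ℕ} (j : Euc N → ℝ≥0∞) (δ : ℝ) : Euc N → ℝ :=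
  fun z => (jdelta j δ z / ∫⁻ y, jdelta j δ y).toReal

/-! ### Auxiliary lemmas -/


lemma osq (r : ℝ) : ENNReal.ofReal (r^2) = (‖r‖₊ : ℝ≥0∞)^2 := by
  rw [← sq_abs r, ENNReal.ofReal_pow (abs_nonneg r), ← Real.enorm_eq_ofReal_abs, enorm_eq_nnnorm]

lemma jdelta_meas {N : ℕ} {j : Euc N → ℝ≥0∞} (hj : Measurable j) (δ : ℝ) :
    Measurable (jdelta j δ) :=
  Measurable.ite (measurableSet_lt measurable_norm measurable_const) measurable_const hj

lemma jdelta_le {N : ℕ} (j : Euc N → ℝ≥0∞) (δ : ℝ) (z : Euc N) : jdelta j δ z ≤ j z := by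
  unfold jdelta; split <;> simp

/-- Cauchy–Schwarz for a probability weight. -/
lemma cs_weighted {α : Type*} [MeasurableSpace α] (μ : Measure α) (w f : α → ℝ≥0∞)
    (hw : AEMeasurable w μ) (hf : AEMeasurable f μ) (hw1 : ∫⁻ a, w a ∂μ = 1) :
    (∫⁻ a, w a * f a ∂μ) ^ 2 ≤ ∫⁻ a, w a * f a ^ 2 ∂μ := by
  have hconj : (2:ℝ).HolderConjugate 2 := Real.HolderConjugate.two_two
  have hhalf : AEMeasurable (fun a => w a ^ (1/2 : ℝ)) μ := hw.pow_const _
  have h := ENNReal.lintegral_mul_le_Lp_mul_Lq μ hconj hhalf (hhalf.mul hf)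
  have e1 : ∀ a, (fun a => w a ^ (1/2:ℝ)) a * ((fun a => w a ^ (1/2:ℝ) * f a) a) = w a * f a := by
    intro a
    have hww : w a ^ (1/2:ℝ) * w a ^ (1/2:ℝ) = w a := by
      rw [← ENNReal.rpow_add_of_nonneg _ _ (by norm_num) (by norm_num)]
      norm_num
    simp only [← mul_assoc, hww]
  have e2 : ∀ a, (w a ^ (1/2:ℝ)) ^ (2:ℝ) = w a := by
    intro a
    rw [← ENNReal.rpow_mul]
    norm_num
  have e3 : ∀ a, (w a ^ (1/2:ℝ) * f a) ^ (2:ℝ) = w a * f a ^ 2 := by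
    intro a
    rw [ENNReal.mul_rpow_of_nonneg _ _ (by norm_num : (0:ℝ) ≤ 2), e2 a,
      ← ENNReal.rpow_natCast (f a) 2]
    norm_num
  simp only [Pi.mul_apply, e1, e3] at h
  simp only [e2] at h
  rw [hw1, ENNReal.one_rpow, one_mul] at h
  calc (∫⁻ a, w a * f a ∂μ) ^ 2 ≤ ((∫⁻ a, w a * f a ^ 2 ∂μ) ^ (1/(2:ℝ))) ^ 2 :=
        pow_le_pow_left' h 2
    _ = ∫⁻ a, w a * f a ^ 2 ∂μ := by
        rw [← ENNReal.rpow_natCast (_ ^ (1/(2:ℝ))) 2, ← ENNReal.rpow_mul]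
        norm_num

section Main

variable {N : ℕ}

theorem main_aux (j : Euc N → ℝ≥0∞) (hj : Measurable j) (δ : ℝ)
    (hfin : (∫⁻ y, jdelta j δ y) ≠ ⊤) (hpos : 0 < ∫⁻ y, jdelta j δ y)
    (u : Euc N → ℝ) (hum : Measurable u) (hu2 : MemLp u 2 (volume : Measure (Euc N))) :
    (∫⁻ x, ENNReal.ofReal ((u x - ∫ y, wdelta j δ (x - y) * u y)^2))
      ≤ (2 / ∫⁻ y, jdelta j δ y) * DnormSq j u := by
  set M := ∫⁻ y, jdelta j δ y with hMdef
  have hM0 : M ≠ 0 := hpos.ne'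
  set W : Euc N → ℝ≥0∞ := fun z => jdelta j δ z / M with hWdef
  have hWmeas : Measurable W := (jdelta_meas hj δ).div_const M
  have hWint : ∫⁻ z, W z = 1 := by
    simp only [hWdef, div_eq_mul_inv]
    rw [lintegral_mul_const' M⁻¹ _ (by simp [hM0]), ← hMdef]
    exact ENNReal.mul_inv_cancel hM0 hfin
  have hWlt : ∀ᵐ z : Euc N, W z < ⊤ := by
    filter_upwards [ae_lt_top (jdelta_meas hj δ) hfin] with z hz
    exact ENNReal.div_lt_top hz.ne hM0
  have hwd : ∀ z, wdelta j δ z = (W z).toReal := fun z => rfl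
  have hwdm : Measurable (wdelta j δ) := hWmeas.ennreal_toReal
  have hWx1 : ∀ x : Euc N, ∫⁻ y, W (x - y) = 1 := fun x =>
    ((Measure.measurePreserving_sub_left volume x).lintegral_comp hWmeas).trans hWint
  have hWxae : ∀ x : Euc N, ∀ᵐ y : Euc N, W (x - y) < ⊤ := fun x =>
    (Measure.measurePreserving_sub_left volume x).quasiMeasurePreserving.ae hWlt
  have hWxmeas : ∀ x : Euc N, Measurable (fun y : Euc N => W (x - y)) := fun x =>
    hWmeas.comp (measurable_const.sub measurable_id)
  have hwdxm : ∀ x : Euc N, Measurable (fun y : Euc N => wdelta j δ (x - y)) := fun x =>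
    hwdm.comp (measurable_const.sub measurable_id)
  have hofw : ∀ x : Euc N, (fun y => (ENNReal.ofReal (wdelta j δ (x - y)))) =ᵐ[volume]
      (fun y => W (x - y)) := by
    intro x
    filter_upwards [hWxae x] with y hy
    rw [hwd, ENNReal.ofReal_toReal hy.ne]
  -- u ∈ L²
  have hu2' : ∫⁻ x, (‖u x‖₊ : ℝ≥0∞)^2 < ⊤ := by
    have h := hu2.integrable_sq.2
    rw [hasFiniteIntegral_def] at h
    refine lt_of_eq_of_lt ?_ h
    apply lintegral_congr
    intro x
    rw [← ENNReal.coe_pow, ← nnnorm_pow, enorm_eq_nnnorm]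
  -- the good set
  have hume : Measurable fun y : Euc N => (‖u y‖₊ : ℝ≥0∞) := hum.nnnorm.coe_nnreal_ennreal
  have hKmeas : Measurable fun x : Euc N => ∫⁻ y, W (x - y) * (‖u y‖₊ : ℝ≥0∞)^2 := by
    apply Measurable.lintegral_prod_right
      (f := fun x y => W (x - y) * (‖u y‖₊ : ℝ≥0∞)^2)
    exact ((hWmeas.comp (measurable_fst.sub measurable_snd)).mul
      ((hume.comp measurable_snd).pow_const 2))
  have hKfin : ∀ᵐ x : Euc N, (∫⁻ y, W (x - y) * (‖u y‖₊ : ℝ≥0∞)^2) < ⊤ := by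
    apply ae_lt_top hKmeas
    rw [lintegral_lintegral_swap (((hWmeas.comp (measurable_fst.sub measurable_snd)).mul
      ((hume.comp measurable_snd).pow_const 2)).aemeasurable)]
    have hc : ∀ y : Euc N, ∫⁻ x, W (x - y) * (‖u y‖₊ : ℝ≥0∞)^2 = (‖u y‖₊ : ℝ≥0∞)^2 := by
      intro y
      rw [lintegral_mul_const' _ _ (ENNReal.pow_ne_top ENNReal.coe_ne_top),
        (measurePreserving_sub_right volume y).lintegral_comp hWmeas, hWint, one_mul]
    rw [lintegral_congr hc]
    exact hu2'.ne
  -- integrability of the weight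
  have hInt1 : ∀ x : Euc N, Integrable (fun y => wdelta j δ (x - y)) volume := by
    intro x
    refine ⟨(hwdxm x).aestronglyMeasurable, ?_⟩
    rw [hasFiniteIntegral_def]
    simp only [enorm_eq_nnnorm]
    have : ∀ᵐ y : Euc N, (‖wdelta j δ (x - y)‖₊ : ℝ≥0∞) = W (x - y) := by
      filter_upwards [hWxae x] with y hy
      rw [hwd, ← enorm_eq_nnnorm, Real.enorm_eq_ofReal ENNReal.toReal_nonneg, ENNReal.ofReal_toReal hy.ne]
    rw [lintegral_congr_ae this, hWx1 x]
    exact one_lt_top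
  have hIntw1 : ∀ x : Euc N, ∫ y, wdelta j δ (x - y) = 1 := by
    intro x
    have heq := integral_eq_lintegral_of_nonneg_ae (μ := volume)
      (f := fun y : Euc N => wdelta j δ (x - y))
      (Eventually.of_forall fun y => ENNReal.toReal_nonneg) (hwdxm x).aestronglyMeasurable
    rw [heq, lintegral_congr_ae (hofw x), hWx1 x]
    simp
  -- the pointwise (a.e.) estimate
  have key : ∀ᵐ x : Euc N, ENNReal.ofReal ((u x - ∫ y, wdelta j δ (x - y) * u y)^2)
      ≤ ∫⁻ y, ENNReal.ofReal ((u x - u y)^2) * W (x - y) := by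
    filter_upwards [hKfin] with x hx
    have hCS0 : (∫⁻ y, W (x - y) * (‖u y‖₊ : ℝ≥0∞))^2 ≤ ∫⁻ y, W (x - y) * (‖u y‖₊ : ℝ≥0∞)^2 :=
      cs_weighted volume _ _ (hWxmeas x).aemeasurable hume.aemeasurable (hWx1 x)
    have hfin1 : (∫⁻ y, W (x - y) * (‖u y‖₊ : ℝ≥0∞)) < ⊤ := by
      by_contra hc
      rw [not_lt, top_le_iff] at hc
      rw [hc] at hCS0
      rw [ENNReal.top_pow (by norm_num), top_le_iff] at hCS0
      exact hx.ne hCS0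
    have hIntu : Integrable (fun y => wdelta j δ (x - y) * u y) volume := by
      refine ⟨((hwdxm x).mul hum).aestronglyMeasurable, ?_⟩
      rw [hasFiniteIntegral_def]
      simp only [enorm_eq_nnnorm]
      have he : ∀ᵐ y : Euc N, (‖wdelta j δ (x - y) * u y‖₊ : ℝ≥0∞)
          = W (x - y) * (‖u y‖₊ : ℝ≥0∞) := by
        filter_upwards [hWxae x] with y hy
        rw [nnnorm_mul, ENNReal.coe_mul, hwd, ← enorm_eq_nnnorm ((W (x - y)).toReal), Real.enorm_eq_ofReal ENNReal.toReal_nonneg,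
          ENNReal.ofReal_toReal hy.ne]
      rw [lintegral_congr_ae he]
      exact hfin1
    have hsub : u x - (∫ y, wdelta j δ (x - y) * u y)
        = ∫ y, wdelta j δ (x - y) * (u x - u y) := by
      have h1 : Integrable (fun y => wdelta j δ (x - y) * u x) volume :=
        (hInt1 x).mul_const (u x)
      rw [show (fun y => wdelta j δ (x - y) * (u x - u y))
          = fun y => wdelta j δ (x - y) * u x - wdelta j δ (x - y) * u y from
          funext fun y => by ring,
        integral_sub h1 hIntu, integral_mul_const, hIntw1 x, one_mul]
    rw [hsub]
    calc ENNReal.ofReal ((∫ y, wdelta j δ (x - y) * (u x - u y))^2)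
        = (‖∫ y, wdelta j δ (x - y) * (u x - u y)‖₊ : ℝ≥0∞)^2 := osq _
      _ ≤ (∫⁻ y, (‖wdelta j δ (x - y) * (u x - u y)‖₊ : ℝ≥0∞))^2 :=
          pow_le_pow_left' (enorm_integral_le_lintegral_enorm _) 2
      _ = (∫⁻ y, W (x - y) * (‖u x - u y‖₊ : ℝ≥0∞))^2 := by
          congr 1
          apply lintegral_congr_ae
          filter_upwards [hWxae x] with y hy
          rw [nnnorm_mul, ENNReal.coe_mul, hwd, ← enorm_eq_nnnorm ((W (x - y)).toReal), Real.enorm_eq_ofReal ENNReal.toReal_nonneg,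
            ENNReal.ofReal_toReal hy.ne]
      _ ≤ ∫⁻ y, W (x - y) * (‖u x - u y‖₊ : ℝ≥0∞)^2 :=
          cs_weighted volume _ _ (hWxmeas x).aemeasurable
            ((measurable_const.sub hum).nnnorm.coe_nnreal_ennreal).aemeasurable (hWx1 x)
      _ = ∫⁻ y, ENNReal.ofReal ((u x - u y)^2) * W (x - y) :=
          lintegral_congr fun y => by rw [osq, mul_comm]
  -- final assembly
  have hprodmeas : Measurable fun p : Euc N × Euc N =>
      ENNReal.ofReal ((u p.1 - u p.2)^2) * W (p.1 - p.2) :=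
    (ENNReal.measurable_ofReal.comp
      (((hum.comp measurable_fst).sub (hum.comp measurable_snd)).pow_const 2)).mul
      (hWmeas.comp (measurable_fst.sub measurable_snd))
  calc (∫⁻ x, ENNReal.ofReal ((u x - ∫ y, wdelta j δ (x - y) * u y)^2))
      ≤ ∫⁻ x, ∫⁻ y, ENNReal.ofReal ((u x - u y)^2) * W (x - y) := lintegral_mono_ae key
    _ = ∫⁻ p : Euc N × Euc N, ENNReal.ofReal ((u p.1 - u p.2)^2) * W (p.1 - p.2)
        ∂(volume.prod volume) := (lintegral_prod _ hprodmeas.aemeasurable).symm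
    _ = (∫⁻ p : Euc N × Euc N, ENNReal.ofReal ((u p.1 - u p.2)^2) * jdelta j δ (p.1 - p.2)
        ∂(volume.prod volume)) * M⁻¹ := by
        simp only [hWdef, div_eq_mul_inv, ← mul_assoc]
        rw [lintegral_mul_const' M⁻¹ _ (by simp [hM0])]
    _ ≤ (∫⁻ p : Euc N × Euc N, ENNReal.ofReal ((u p.1 - u p.2)^2) * j (p.1 - p.2)
        ∂(volume.prod volume)) * M⁻¹ := by
        apply mul_le_mul_left
        exact lintegral_mono fun p => mul_le_mul_right (jdelta_le j δ _) _
    _ = 2 * Ej j u * M⁻¹ := by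
        rw [Ej, ← mul_assoc, show (2:ℝ≥0∞) * (1/2) = 1 by
          rw [one_div, ENNReal.mul_inv_cancel two_ne_zero ofNat_ne_top], one_mul]
    _ ≤ 2 * DnormSq j u * M⁻¹ := by
        apply mul_le_mul_left
        exact mul_le_mul_right le_self_add 2
    _ = (2 / M) * DnormSq j u := by
        rw [div_eq_mul_inv]; ring

end Main

/-- Estimate of the L²-distance of u to its weighted average:
    ‖u − w_δ * u‖²_{L²} ≤ (2/‖j_δ‖_{L¹}) ‖u‖². -/
theorem dist_to_weighted_average {N : ℕ} (j : Euc N → ℝ≥0∞) (hj : Measurable j)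
    (heven : ∀ z, j (-z) = j z) (hA1 : CondA1 j)
    (δ : ℝ) (hδ : 0 < δ)
    (hfin : (∫⁻ y, jdelta j δ y) ≠ ⊤) (hpos : 0 < ∫⁻ y, jdelta j δ y)
    (u : Euc N → ℝ) (hu : MemDj j u) :
    (∫⁻ x, ENNReal.ofReal ((u x - ∫ y, wdelta j δ (x - y) * u y)^2))
      ≤ (2 / ∫⁻ y, jdelta j δ y) * DnormSq j u := by
  obtain ⟨hu2, hEj⟩ := hu
  obtain ⟨v, hvm, huv⟩ := hu2.aestronglyMeasurable
  have hvmeas : Measurable v := hvm.measurable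
  have h1 : ∀ᵐ p : Euc N × Euc N ∂(volume.prod volume), u p.1 = v p.1 :=
    Measure.quasiMeasurePreserving_fst.ae huv
  have h2 : ∀ᵐ p : Euc N × Euc N ∂(volume.prod volume), u p.2 = v p.2 :=
    Measure.quasiMeasurePreserving_snd.ae huv
  have hEj_eq : Ej j u = Ej j v := by
    unfold Ej
    congr 1
    apply lintegral_congr_ae
    filter_upwards [h1, h2] with p e1 e2
    rw [e1, e2]
  have hl2_eq : l2sq u = l2sq v :=
    lintegral_congr_ae (huv.mono fun x hx => by simp only [hx])
  have hconv : ∀ x : Euc N, (∫ y, wdelta j δ (x - y) * u y) = ∫ y, wdelta j δ (x - y) * v y :=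
    fun x => integral_congr_ae (huv.mono fun y hy => by simp only [hy])
  have hD_eq : DnormSq j u = DnormSq j v := by
    rw [DnormSq, DnormSq, hEj_eq, hl2_eq]
  have hLHS : (∫⁻ x, ENNReal.ofReal ((u x - ∫ y, wdelta j δ (x - y) * u y)^2))
      = ∫⁻ x, ENNReal.ofReal ((v x - ∫ y, wdelta j δ (x - y) * v y)^2) := by
    apply lintegral_congr_ae
    filter_upwards [huv] with x hx
    rw [hx, hconv x]
  rw [hLHS, hD_eq]
  exact main_aux j hj δ hfin hpos v hvmeas (hu2.ae_eq huv)
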